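/- Let X = [v_1, \ldots, v_m] be a finite list of vectors in \mathbb{R}^n spanning a pointed cone (i.e., there exists u \in (\mathbb{R}^n)^* with \langle u, v_i \rangle > 0 for all i). Then for every Schwartz function f on \mathbb{R}^n, the integral \int_0^\infty \cdots \int_0^\infty f(\sum_{i=1}^m t_i v_i)\, dt_1 \cdots dt_m converges absolutely, and the resulting linear functional T(X) on Schwartz functions is a tempered distribution. Moreover, for each v_j \in X, the distributional derivative satisfies \partial_{v_j} T(X) = T(X - \{v_j\}). -/

import Mathlib

open MeasureTheory Filter Set Topology

namespace MultisplineAux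

lemma orthant_measurable (k : ℕ) : MeasurableSet {t : Fin k → ℝ | ∀ i, 0 ≤ t i} := by
  have : {t : Fin k → ℝ | ∀ i, 0 ≤ t i} = ⋂ i, (fun t : Fin k → ℝ => t i) ⁻¹' Set.Ici 0 := by
    ext t; simp [Set.mem_iInter]
  rw [this]
  exact MeasurableSet.iInter fun i => (measurable_pi_apply i) measurableSet_Ici

lemma g_integrable (k : ℕ) :
    Integrable (fun t : Fin k → ℝ => ∏ i, (1 + t i ^ 2)⁻¹) :=
  Integrable.fin_nat_prod fun _ => integrable_inv_one_add_sq

lemma spline_bound {d k : ℕ} (w : Fin k → EuclideanSpace ℝ (Fin d))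
    (u : EuclideanSpace ℝ (Fin d) →L[ℝ] ℝ) (hu : ∀ i, 0 < u (w i)) :
    ∃ C : ℝ, 0 ≤ C ∧ ∀ (f : SchwartzMap (EuclideanSpace ℝ (Fin d)) ℂ)
      (t : Fin k → ℝ), (∀ i, 0 ≤ t i) →
      ‖f (∑ i, t i • w i)‖ ≤
        (C * (Finset.Iic (2 * k, 0)).sup
            (schwartzSeminormFamily ℂ (EuclideanSpace ℝ (Fin d)) ℂ) f) *
          ∏ i, (1 + t i ^ 2)⁻¹ := by
  set A : ℝ := ∑ i, (u (w i))⁻¹ with hA_def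
  have hA : 0 ≤ A := Finset.sum_nonneg fun i _ => (inv_nonneg).2 (hu i).le
  set B : ℝ := max 1 (A * ‖u‖) with hB_def
  have hB1 : (1 : ℝ) ≤ B := le_max_left _ _
  have hB0 : (0 : ℝ) ≤ B := zero_le_one.trans hB1
  refine ⟨(2 * B) ^ (2 * k), by positivity, ?_⟩
  intro f t ht
  set x : EuclideanSpace ℝ (Fin d) := ∑ i, t i • w i with hx_def
  set Sf : ℝ := (Finset.Iic (2 * k, 0)).sup
      (schwartzSeminormFamily ℂ (EuclideanSpace ℝ (Fin d)) ℂ) f with hSf_def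
  have hSf0 : 0 ≤ Sf := apply_nonneg _ f
  -- bound on the sum of coordinates
  have hux : u x = ∑ i, t i * u (w i) := by
    simp [hx_def, map_sum, _root_.map_smul, smul_eq_mul]
  have hux0 : ∀ j, t j * u (w j) ≤ u x := by
    intro j
    rw [hux]
    exact Finset.single_le_sum (fun i _ => mul_nonneg (ht i) (hu i).le) (Finset.mem_univ j)
  have huxnorm : u x ≤ ‖u‖ * ‖x‖ := (le_abs_self _).trans (u.le_opNorm x)
  have hsum : ∑ i, t i ≤ A * (‖u‖ * ‖x‖) := by
    have h1 : ∑ i, t i ≤ ∑ i, u x * (u (w i))⁻¹ := by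
      apply Finset.sum_le_sum
      intro i _
      have h := (le_div_iff₀ (hu i)).2 (hux0 i)
      simpa [div_eq_mul_inv] using h
    have h2 : ∑ i, u x * (u (w i))⁻¹ = u x * A := by
      rw [hA_def, Finset.mul_sum]
    have hux_nonneg : 0 ≤ u x := by
      rw [hux]
      exact Finset.sum_nonneg fun i _ => mul_nonneg (ht i) (hu i).le
    calc ∑ i, t i ≤ u x * A := by rw [← h2]; exact h1
      _ ≤ (‖u‖ * ‖x‖) * A := by
          apply mul_le_mul_of_nonneg_right huxnorm hA
      _ = A * (‖u‖ * ‖x‖) := by ring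
  have htsum0 : 0 ≤ ∑ i, t i := Finset.sum_nonneg fun i _ => ht i
  have h1 : 1 + ∑ i, t i ≤ B * (1 + ‖x‖) := by
    have hx0 : 0 ≤ ‖x‖ := norm_nonneg _
    have hAB : A * ‖u‖ ≤ B := le_max_right _ _
    nlinarith [mul_le_mul_of_nonneg_right hAB hx0]
  have h2 : ∏ i, (1 + t i ^ 2) ≤ (1 + ∑ i, t i) ^ (2 * k) := by
    have : ∀ i : Fin k, 1 + t i ^ 2 ≤ (1 + ∑ i, t i) ^ 2 := by
      intro i
      have hti : t i ≤ ∑ i, t i :=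
        Finset.single_le_sum (fun i _ => ht i) (Finset.mem_univ i)
      nlinarith [ht i, htsum0]
    calc ∏ i, (1 + t i ^ 2) ≤ ∏ _i : Fin k, (1 + ∑ i, t i) ^ 2 := by
          apply Finset.prod_le_prod (fun i _ => by positivity) (fun i _ => this i)
      _ = ((1 + ∑ i, t i) ^ 2) ^ k := by
          rw [Finset.prod_const, Finset.card_univ, Fintype.card_fin]
      _ = (1 + ∑ i, t i) ^ (2 * k) := by rw [← pow_mul]
  have h3 : (1 + ‖x‖) ^ (2 * k) * ‖f x‖ ≤ 2 ^ (2 * k) * Sf := by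
    have := SchwartzMap.one_add_le_sup_seminorm_apply (𝕜 := ℂ) (m := (2 * k, 0))
      (k := 2 * k) (n := 0) le_rfl le_rfl f x
    rwa [norm_iteratedFDeriv_zero] at this
  have hP : 0 < ∏ i, (1 + t i ^ 2) := Finset.prod_pos fun i _ => by positivity
  have key : ‖f x‖ * ∏ i, (1 + t i ^ 2) ≤ (2 * B) ^ (2 * k) * Sf := by
    have hf0 : 0 ≤ ‖f x‖ := norm_nonneg _
    calc ‖f x‖ * ∏ i, (1 + t i ^ 2) ≤ ‖f x‖ * (1 + ∑ i, t i) ^ (2 * k) :=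
          mul_le_mul_of_nonneg_left h2 hf0
      _ ≤ ‖f x‖ * (B * (1 + ‖x‖)) ^ (2 * k) := by
          apply mul_le_mul_of_nonneg_left _ hf0
          apply pow_le_pow_left₀ (by positivity) h1
      _ = B ^ (2 * k) * ((1 + ‖x‖) ^ (2 * k) * ‖f x‖) := by rw [mul_pow]; ring
      _ ≤ B ^ (2 * k) * (2 ^ (2 * k) * Sf) := by
          apply mul_le_mul_of_nonneg_left h3 (by positivity)
      _ = (2 * B) ^ (2 * k) * Sf := by rw [mul_pow]; ring
  rw [Finset.prod_inv_distrib, ← div_eq_mul_inv, le_div_iff₀ hP]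
  exact key

lemma spline_integrableOn {d k : ℕ} (w : Fin k → EuclideanSpace ℝ (Fin d))
    (u : EuclideanSpace ℝ (Fin d) →L[ℝ] ℝ) (hu : ∀ i, 0 < u (w i))
    (f : SchwartzMap (EuclideanSpace ℝ (Fin d)) ℂ) :
    IntegrableOn (fun t : Fin k → ℝ => f (∑ i, t i • w i))
      {t : Fin k → ℝ | ∀ i, 0 ≤ t i} := by
  obtain ⟨C, hC0, hC⟩ := spline_bound w u hu
  set Sf : ℝ := (Finset.Iic (2 * k, 0)).sup
      (schwartzSeminormFamily ℂ (EuclideanSpace ℝ (Fin d)) ℂ) f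
  refine Integrable.mono' (((g_integrable k).integrableOn).const_mul (C * Sf)) ?_ ?_
  · apply Continuous.aestronglyMeasurable
    exact f.continuous.comp
      (continuous_finset_sum _ fun i _ => (continuous_apply i).smul continuous_const)
  · refine Filter.eventually_of_mem (ae_restrict_mem (orthant_measurable k)) ?_
    intro t ht
    exact hC f t ht

end MultisplineAux

open MultisplineAux

/-- Let `X = [v₀,…,v_m]` be a list of vectors in `ℝ^n` spanning a pointed
cone (there is `u` with `⟨u, vᵢ⟩ > 0` for all `i`). Then for every Schwartz function `f`,
the integral `∫_{[0,∞)^{m+1}} f(∑ tᵢ vᵢ) dt` converges absolutely; the resulting linear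
functional `T(X)` is a tempered distribution; and for each `vⱼ` the distributional
derivative satisfies `∂_{vⱼ} T(X) = T(X - {vⱼ})`, i.e.
`-∫_{[0,∞)^{m+1}} (∂_{vⱼ}f)(∑ tᵢ vᵢ) dt = ∫_{[0,∞)^m} f(∑_{i≠j} tᵢ vᵢ) dt`. -/
theorem multispline_tempered_and_derivative
    (n m : ℕ) (v : Fin (m + 1) → EuclideanSpace ℝ (Fin n))
    (hpointed : ∃ u : Module.Dual ℝ (EuclideanSpace ℝ (Fin n)), ∀ i, 0 < u (v i)) :
    (∀ f : SchwartzMap (EuclideanSpace ℝ (Fin n)) ℂ,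
      IntegrableOn (fun t : Fin (m + 1) → ℝ => f (∑ i, t i • v i))
        {t : Fin (m + 1) → ℝ | ∀ i, 0 ≤ t i}) ∧
    (∃ T : SchwartzMap (EuclideanSpace ℝ (Fin n)) ℂ →L[ℂ] ℂ,
      ∀ f : SchwartzMap (EuclideanSpace ℝ (Fin n)) ℂ,
        T f = ∫ t in {t : Fin (m + 1) → ℝ | ∀ i, 0 ≤ t i}, f (∑ i, t i • v i)) ∧
    (∀ j : Fin (m + 1), ∀ f : SchwartzMap (EuclideanSpace ℝ (Fin n)) ℂ,
      -∫ t in {t : Fin (m + 1) → ℝ | ∀ i, 0 ≤ t i},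
          fderiv ℝ (⇑f) (∑ i, t i • v i) (v j)
        = ∫ s in {s : Fin m → ℝ | ∀ i, 0 ≤ s i},
            f (∑ i, s i • v (j.succAbove i))) := by
  obtain ⟨u₀, hu₀⟩ := hpointed
  set u : EuclideanSpace ℝ (Fin n) →L[ℝ] ℝ := LinearMap.toContinuousLinearMap u₀ with hu_def
  have hu : ∀ i, 0 < u (v i) := hu₀
  have hInt : ∀ f : SchwartzMap (EuclideanSpace ℝ (Fin n)) ℂ,
      IntegrableOn (fun t : Fin (m + 1) → ℝ => f (∑ i, t i • v i))
        {t : Fin (m + 1) → ℝ | ∀ i, 0 ≤ t i} := fun f => spline_integrableOn v u hu f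
  refine ⟨hInt, ?_, ?_⟩
  · -- the tempered distribution
    obtain ⟨C, hC0, hC⟩ := spline_bound v u hu
    have hgint0 : (0:ℝ) ≤ ∫ t in {t : Fin (m+1) → ℝ | ∀ i, 0 ≤ t i},
        ∏ i, (1 + t i ^ 2)⁻¹ :=
      integral_nonneg fun t => Finset.prod_nonneg fun i _ => by positivity
    refine ⟨SchwartzMap.mkCLMtoNormedSpace
      (fun f => ∫ t in {t : Fin (m + 1) → ℝ | ∀ i, 0 ≤ t i}, f (∑ i, t i • v i))
      (fun f g => by
        simp only [SchwartzMap.add_apply]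
        exact integral_add (hInt f) (hInt g))
      (fun a f => by
        simp only [SchwartzMap.smul_apply, RingHom.id_apply, smul_eq_mul]
        exact integral_smul a _)
      ⟨Finset.Iic (2 * (m + 1), 0),
        C * ∫ t in {t : Fin (m+1) → ℝ | ∀ i, 0 ≤ t i}, ∏ i, (1 + t i ^ 2)⁻¹,
        mul_nonneg hC0 hgint0, ?_⟩, fun f => rfl⟩
    intro f
    set Sf : ℝ := (Finset.Iic (2 * (m + 1), 0)).sup
        (schwartzSeminormFamily ℂ (EuclideanSpace ℝ (Fin n)) ℂ) f with hSf_def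
    have hb : ‖∫ t in {t : Fin (m + 1) → ℝ | ∀ i, 0 ≤ t i}, f (∑ i, t i • v i)‖
        ≤ ∫ t in {t : Fin (m+1) → ℝ | ∀ i, 0 ≤ t i},
            (C * Sf) * ∏ i, (1 + t i ^ 2)⁻¹ := by
      apply norm_integral_le_of_norm_le
        (((g_integrable (m+1)).integrableOn).const_mul (C * Sf))
      refine Filter.eventually_of_mem (ae_restrict_mem (orthant_measurable (m+1))) ?_
      intro t ht
      exact hC f t ht
    rw [integral_const_mul] at hb
    calc ‖∫ t in {t : Fin (m + 1) → ℝ | ∀ i, 0 ≤ t i}, f (∑ i, t i • v i)‖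
        ≤ (C * Sf) * ∫ t in {t : Fin (m+1) → ℝ | ∀ i, 0 ≤ t i},
            ∏ i, (1 + t i ^ 2)⁻¹ := hb
      _ = (C * ∫ t in {t : Fin (m+1) → ℝ | ∀ i, 0 ≤ t i},
            ∏ i, (1 + t i ^ 2)⁻¹) * Sf := by ring
  · -- the derivative identity
    intro j f
    have hunorm : (0:ℝ) < ‖u‖ := by
      by_contra h
      push_neg at h
      have h0 : ‖u‖ = 0 := le_antisymm h (norm_nonneg _)
      have h2 : u (v j) ≤ ‖u‖ * ‖v j‖ := (le_abs_self _).trans (u.le_opNorm (v j))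
      rw [h0, zero_mul] at h2
      exact absurd (hu j) (not_lt.2 h2)
    set O1 : Set (Fin (m+1) → ℝ) := {t | ∀ i, 0 ≤ t i} with hO1
    set O2 : Set (Fin m → ℝ) := {s | ∀ i, 0 ≤ s i} with hO2
    set y : (Fin m → ℝ) → EuclideanSpace ℝ (Fin n) :=
      fun s => ∑ i, s i • v (j.succAbove i) with hy
    set g : ℝ × (Fin m → ℝ) → ℂ :=
      fun p => fderiv ℝ (⇑f) (y p.2 + p.1 • v j) (v j) with hg
    set e : (Fin (m+1) → ℝ) ≃ᵐ ℝ × (Fin m → ℝ) :=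
      MeasurableEquiv.piFinSuccAbove (fun _ => ℝ) j with he_def
    have he : ∀ t : Fin (m+1) → ℝ, e t = (t j, fun i => t (j.succAbove i)) := fun t => rfl
    have hmp : MeasurePreserving e (volume : Measure (Fin (m+1) → ℝ))
        ((volume : Measure ℝ).prod (volume : Measure (Fin m → ℝ))) := by
      have h := measurePreserving_piFinSuccAbove (fun _ : Fin (m+1) => (volume : Measure ℝ)) j
      have hv1 : (volume : Measure (Fin (m+1) → ℝ)) = Measure.pi fun _ => volume := rfl
      have hv2 : (volume : Measure (Fin m → ℝ)) = Measure.pi fun _ => volume := rfl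
      rw [hv1, hv2]
      exact h
    have hsum : ∀ t : Fin (m+1) → ℝ,
        ∑ i, t i • v i = t j • v j + ∑ i, t (j.succAbove i) • v (j.succAbove i) :=
      fun t => Fin.sum_univ_succAbove (fun i => t i • v i) j
    have hge : ∀ t : Fin (m+1) → ℝ,
        g (e t) = fderiv ℝ (⇑f) (∑ i, t i • v i) (v j) := by
      intro t
      rw [he t, hg, hsum t]
      simp only [hy]
      rw [add_comm]
    have hpre : e ⁻¹' (Set.Ici (0:ℝ) ×ˢ O2) = O1 := by
      ext t
      simp only [Set.mem_preimage, he t, Set.mem_prod, Set.mem_Ici, hO1, hO2,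
        Set.mem_setOf_eq]
      constructor
      · rintro ⟨h0, h1⟩ i
        rcases eq_or_ne i j with rfl | hne
        · exact h0
        · obtain ⟨i', rfl⟩ := Fin.exists_succAbove_eq hne
          exact h1 i'
      · exact fun h => ⟨h j, fun i => h _⟩
    have hFint : IntegrableOn
        (fun t : Fin (m+1) → ℝ => fderiv ℝ (⇑f) (∑ i, t i • v i) (v j)) O1 := by
      have h := spline_integrableOn v u hu (LineDeriv.lineDerivOp (v j) f)
      have heq : (fun t : Fin (m+1) → ℝ =>
          (LineDeriv.lineDerivOp (v j) f) (∑ i, t i • v i))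
          = fun t : Fin (m+1) → ℝ => fderiv ℝ (⇑f) (∑ i, t i • v i) (v j) := by
        funext t
        rw [SchwartzMap.lineDerivOp_apply_eq_fderiv]
      rw [heq] at h
      exact h
    have hSmeas : MeasurableSet (Set.Ici (0:ℝ) ×ˢ O2) :=
      measurableSet_Ici.prod (orthant_measurable m)
    have hmp' : MeasurePreserving e ((volume : Measure (Fin (m+1) → ℝ)).restrict O1)
        ((((volume : Measure ℝ).prod (volume : Measure (Fin m → ℝ)))).restrict
          (Set.Ici 0 ×ˢ O2)) := by
      have h := hmp.restrict_preimage hSmeas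
      rwa [hpre] at h
    have hgint : Integrable g
        (((volume : Measure ℝ).restrict (Set.Ici 0)).prod
          ((volume : Measure (Fin m → ℝ)).restrict O2)) := by
      rw [Measure.prod_restrict]
      refine (hmp'.integrable_comp_emb e.measurableEmbedding).mp ?_
      have : (g ∘ ⇑e) = fun t : Fin (m+1) → ℝ =>
          fderiv ℝ (⇑f) (∑ i, t i • v i) (v j) := funext hge
      rw [this]
      exact hFint
    have step1 : (∫ p in Set.Ici (0:ℝ) ×ˢ O2, g p
          ∂((volume : Measure ℝ).prod (volume : Measure (Fin m → ℝ))))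
        = ∫ t in O1, fderiv ℝ (⇑f) (∑ i, t i • v i) (v j) := by
      rw [← hmp.setIntegral_preimage_emb e.measurableEmbedding g (Set.Ici 0 ×ˢ O2), hpre]
      exact setIntegral_congr_fun (orthant_measurable _) (fun t _ => hge t)
    have step2 : (∫ p in Set.Ici (0:ℝ) ×ˢ O2, g p
          ∂((volume : Measure ℝ).prod (volume : Measure (Fin m → ℝ))))
        = ∫ s in O2, ∫ r in Set.Ici (0:ℝ), g (r, s) := by
      rw [← Measure.prod_restrict]
      exact integral_prod_symm g hgint
    have hae : ∀ᵐ s ∂((volume : Measure (Fin m → ℝ)).restrict O2),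
        (∫ r in Set.Ici (0:ℝ), g (r, s)) = - f (y s) := by
      filter_upwards [hgint.prod_left_ae] with s hs
      have hderiv : ∀ r : ℝ, HasDerivAt (fun r : ℝ => f (y s + r • v j)) (g (r, s)) r := by
        intro r
        have h1 : HasDerivAt (fun r : ℝ => y s + r • v j) (v j) r := by
          have := ((hasDerivAt_id r).smul_const (v j)).const_add (y s)
          simpa using this
        have h2 := (f.differentiableAt.hasFDerivAt
          (x := y s + r • v j)).comp_hasDerivAt r h1
        exact h2
      have htend : Tendsto (fun r : ℝ => f (y s + r • v j)) atTop (𝓝 0) := by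
        have h1 : Tendsto (fun r : ℝ => y s + r • v j) atTop
            (cocompact (EuclideanSpace ℝ (Fin n))) := by
          apply tendsto_cocompact_of_tendsto_dist_comp_atTop (0 : EuclideanSpace ℝ (Fin n))
          simp only [dist_zero_right]
          have hlow : ∀ r : ℝ, (u (y s) + r * u (v j)) / ‖u‖ ≤ ‖y s + r • v j‖ := by
            intro r
            rw [div_le_iff₀ hunorm]
            have h3 : u (y s + r • v j) = u (y s) + r * u (v j) := by
              simp [map_add, _root_.map_smul, smul_eq_mul]
            calc u (y s) + r * u (v j) = u (y s + r • v j) := h3.symm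
              _ ≤ ‖u‖ * ‖y s + r • v j‖ :=
                  (le_abs_self _).trans (u.le_opNorm _)
              _ = ‖y s + r • v j‖ * ‖u‖ := by ring
          apply tendsto_atTop_mono hlow
          apply Tendsto.atTop_div_const hunorm
          apply tendsto_atTop_add_const_left
          exact Tendsto.atTop_mul_const (hu j) tendsto_id
        have h2 : Tendsto (⇑f) (cocompact (EuclideanSpace ℝ (Fin n))) (𝓝 0) :=
          f.toZeroAtInfty.zero_at_infty'
        exact h2.comp h1
      have hIci : IntegrableOn (fun r : ℝ => g (r, s)) (Set.Ici 0) := hs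
      have hIoi : IntegrableOn (fun r : ℝ => g (r, s)) (Set.Ioi 0) :=
        hIci.mono_set Set.Ioi_subset_Ici_self
      have hftc := integral_Ioi_of_hasDerivAt_of_tendsto'
        (f := fun r : ℝ => f (y s + r • v j)) (f' := fun r : ℝ => g (r, s))
        (fun r _ => hderiv r) hIoi htend
      rw [integral_Ici_eq_integral_Ioi, hftc]
      simp
    have step3 : (∫ s in O2, ∫ r in Set.Ici (0:ℝ), g (r, s))
        = ∫ s in O2, - f (y s) := integral_congr_ae hae
    calc -∫ t in O1, fderiv ℝ (⇑f) (∑ i, t i • v i) (v j)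
        = -∫ s in O2, ∫ r in Set.Ici (0:ℝ), g (r, s) := by rw [← step2, step1]
      _ = -∫ s in O2, - f (y s) := by rw [step3]
      _ = ∫ s in O2, f (y s) := by rw [integral_neg, neg_neg]
      _ = ∫ s in O2, f (∑ i, s i • v (j.succAbove i)) := rfl
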